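/- arXiv:0706.1037 — 4 statements merged into one kernel-verified Lean document; each statement's English description precedes it below -/
import Mathlib

section
/- Let γ : [0,L] → ℝⁿ be a C² curve parametrized by arclength with constant curvature 1 (i.e. ‖γ'(t)‖ = ‖γ''(t)‖ = 1 for all t), and let V : [0,L] → ℝⁿ be a C² vector field along γ with V(t)·γ'(t) = 0 for all t. Define γ_ε(t) = γ(t) + εV(t). Then the derivative at ε = 0 of the curvature κγ_ε(t) equals γ''(t)·V''(t) − 2γ'(t)·V'(t). -/
/-- The (unnormalized-parameter) curvature of a regular C² curve:
κα = ‖α''(α'·α') − α'(α''·α')‖ · ‖α'‖⁻⁴. -/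
noncomputable def curv {n : ℕ} (α : ℝ → EuclideanSpace ℝ (Fin n)) (t : ℝ) : ℝ :=
  ‖(inner ℝ (deriv α t) (deriv α t) : ℝ) • deriv (deriv α) t -
      (inner ℝ (deriv (deriv α) t) (deriv α t) : ℝ) • deriv α t‖ / ‖deriv α t‖ ^ 4

/-- First variation of curvature for a normal variation of a unit-speed curve of
constant curvature 1. -/
theorem first_variation_of_curvature {n : ℕ} (L : ℝ) (hL : 0 < L)
    (γ V : ℝ → EuclideanSpace ℝ (Fin n))
    (hγ : ContDiff ℝ 2 γ) (hV : ContDiff ℝ 2 V)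
    (hunit : ∀ t ∈ Set.Icc (0 : ℝ) L, ‖deriv γ t‖ = 1)
    (hκ : ∀ t ∈ Set.Icc (0 : ℝ) L, ‖deriv (deriv γ) t‖ = 1)
    (horth : ∀ t ∈ Set.Icc (0 : ℝ) L, (inner ℝ (V t) (deriv γ t) : ℝ) = 0) :
    ∀ t ∈ Set.Icc (0 : ℝ) L,
      HasDerivAt (fun ε : ℝ => curv (fun s => γ s + ε • V s) t)
        ((inner ℝ (deriv (deriv γ) t) (deriv (deriv V) t) : ℝ)
          - 2 * (inner ℝ (deriv γ t) (deriv V t) : ℝ)) 0 := by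
  intro t ht
  have hγd : Differentiable ℝ γ := hγ.differentiable two_ne_zero
  have hVd : Differentiable ℝ V := hV.differentiable two_ne_zero
  have hγ2 : ContDiff ℝ (1+1) γ := by exact_mod_cast hγ
  have hV2 : ContDiff ℝ (1+1) V := by exact_mod_cast hV
  have hγ'd : Differentiable ℝ (deriv γ) :=
    (contDiff_succ_iff_deriv.mp hγ2).2.2.differentiable one_ne_zero
  have hV'd : Differentiable ℝ (deriv V) :=
    (contDiff_succ_iff_deriv.mp hV2).2.2.differentiable one_ne_zero
  set a := deriv γ t with ha_def
  set b := deriv (deriv γ) t with hb_def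
  set c := deriv V t with hc_def
  set d := deriv (deriv V) t with hd_def
  -- derivatives of the perturbed curve
  have hd1 : ∀ (ε : ℝ) (s : ℝ), deriv (fun s => γ s + ε • V s) s = deriv γ s + ε • deriv V s :=
    fun ε s => ((hγd s).hasDerivAt.add ((hVd s).hasDerivAt.const_smul ε)).deriv
  have hd2 : ∀ ε : ℝ, deriv (deriv (fun s => γ s + ε • V s)) t = b + ε • d := by
    intro ε
    have h : deriv (fun s => γ s + ε • V s) = fun s => deriv γ s + ε • deriv V s :=
      funext (hd1 ε)
    rw [h]
    exact ((hγ'd t).hasDerivAt.add ((hV'd t).hasDerivAt.const_smul ε)).deriv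
  -- rewrite the function of ε explicitly
  have hfun : (fun ε : ℝ => curv (fun s => γ s + ε • V s) t) =
      fun ε : ℝ => ‖(inner ℝ (a + ε • c) (a + ε • c) : ℝ) • (b + ε • d) -
          (inner ℝ (b + ε • d) (a + ε • c) : ℝ) • (a + ε • c)‖ / ‖a + ε • c‖ ^ 4 := by
    funext ε
    unfold curv
    rw [hd1 ε t, hd2 ε]
  rw [hfun]
  -- key scalar facts
  have ha1 : ‖a‖ = 1 := hunit t ht
  have hb1 : ‖b‖ = 1 := hκ t ht
  have haa : (inner ℝ a a : ℝ) = 1 := by rw [real_inner_self_eq_norm_sq, ha1]; norm_num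
  have hbb : (inner ℝ b b : ℝ) = 1 := by rw [real_inner_self_eq_norm_sq, hb1]; norm_num
  have hba : (inner ℝ b a : ℝ) = 0 := by
    have h1 : HasDerivWithinAt (fun s => (inner ℝ (deriv γ s) (deriv γ s) : ℝ))
        ((inner ℝ a b : ℝ) + (inner ℝ b a : ℝ)) (Set.Icc 0 L) t :=
      (((hγ'd t).hasDerivAt).inner ℝ ((hγ'd t).hasDerivAt)).hasDerivWithinAt
    have h2 : HasDerivWithinAt (fun s => (inner ℝ (deriv γ s) (deriv γ s) : ℝ))
        0 (Set.Icc 0 L) t := by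
      have hc : HasDerivWithinAt (fun _ : ℝ => (1 : ℝ)) 0 (Set.Icc 0 L) t :=
        (hasDerivAt_const t (1:ℝ)).hasDerivWithinAt
      refine hc.congr (fun s hs => ?_) ?_
      · rw [real_inner_self_eq_norm_sq, hunit s hs]; norm_num
      · rw [real_inner_self_eq_norm_sq, hunit t ht]; norm_num
    have := (uniqueDiffOn_Icc hL t ht).eq_deriv _ h1 h2
    rw [real_inner_comm a b] at this
    rw [real_inner_comm a b]
    linarith
  -- build the derivative
  have hac : HasDerivAt (fun ε : ℝ => a + ε • c) c 0 := by
    simpa using ((hasDerivAt_id (0:ℝ)).smul_const c).const_add a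
  have hbd : HasDerivAt (fun ε : ℝ => b + ε • d) d 0 := by
    simpa using ((hasDerivAt_id (0:ℝ)).smul_const d).const_add b
  have hq : HasDerivAt (fun ε : ℝ => (inner ℝ (a + ε • c) (a + ε • c) : ℝ))
      (2 * (inner ℝ a c : ℝ)) 0 := by
    have := hac.inner ℝ hac
    simp only [zero_smul, add_zero] at this
    convert this using 1
    · rfl
    · rfl
    rw [real_inner_comm c a]; ring
  have hr : HasDerivAt (fun ε : ℝ => (inner ℝ (b + ε • d) (a + ε • c) : ℝ))
      ((inner ℝ b c : ℝ) + (inner ℝ d a : ℝ)) 0 := by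
    have := hbd.inner ℝ hac
    simpa using this
  have hw : HasDerivAt
      (fun ε : ℝ => (inner ℝ (a + ε • c) (a + ε • c) : ℝ) • (b + ε • d) -
          (inner ℝ (b + ε • d) (a + ε • c) : ℝ) • (a + ε • c))
      ((2 * (inner ℝ a c : ℝ)) • b + d - ((inner ℝ b c : ℝ) + (inner ℝ d a : ℝ)) • a) 0 := by
    have := (hq.smul hbd).sub (hr.smul hac)
    simp only [zero_smul, add_zero, haa, hba, one_smul] at this
    convert this using 1
    · rfl
    · rfl
    · rfl
    · rfl
    module
  set w' : EuclideanSpace ℝ (Fin n) :=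
    (2 * (inner ℝ a c : ℝ)) • b + d - ((inner ℝ b c : ℝ) + (inner ℝ d a : ℝ)) • a with hw'_def

  -- numerator: inner ℝ of w with itself, then sqrt
  have hQ : HasDerivAt (fun ε : ℝ => (inner ℝ
      ((inner ℝ (a + ε • c) (a + ε • c) : ℝ) • (b + ε • d) -
          (inner ℝ (b + ε • d) (a + ε • c) : ℝ) • (a + ε • c))
      ((inner ℝ (a + ε • c) (a + ε • c) : ℝ) • (b + ε • d) -
          (inner ℝ (b + ε • d) (a + ε • c) : ℝ) • (a + ε • c)) : ℝ))
      (2 * (inner ℝ b w' : ℝ)) 0 := by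
    have h := hw.inner ℝ hw
    simp only [zero_smul, add_zero, haa, hba, one_smul, sub_zero] at h
    convert h using 1
    · rfl
    · rfl
    rw [real_inner_comm w' b]; ring
  have hbw' : (inner ℝ b w' : ℝ) = (inner ℝ b d : ℝ) + 2 * (inner ℝ a c : ℝ) := by
    rw [hw'_def]
    simp [inner_add_right, inner_sub_right, inner_smul_right, hbb,
      real_inner_comm b a, hba, hb1]
    ring
  have hQ0 : (inner ℝ b b : ℝ) ≠ 0 := by rw [hbb]; norm_num
  have hN : HasDerivAt (fun ε : ℝ => ‖(inner ℝ (a + ε • c) (a + ε • c) : ℝ) • (b + ε • d) -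
          (inner ℝ (b + ε • d) (a + ε • c) : ℝ) • (a + ε • c)‖)
      ((inner ℝ b w' : ℝ)) 0 := by
    have hf0 : (inner ℝ
          ((inner ℝ (a + (0:ℝ) • c) (a + (0:ℝ) • c) : ℝ) • (b + (0:ℝ) • d) -
              (inner ℝ (b + (0:ℝ) • d) (a + (0:ℝ) • c) : ℝ) • (a + (0:ℝ) • c))
          ((inner ℝ (a + (0:ℝ) • c) (a + (0:ℝ) • c) : ℝ) • (b + (0:ℝ) • d) -
              (inner ℝ (b + (0:ℝ) • d) (a + (0:ℝ) • c) : ℝ) • (a + (0:ℝ) • c)) : ℝ) = 1 := by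
      simp only [zero_smul, add_zero, haa, hba, one_smul, sub_zero]
      exact hbb
    have hs : HasDerivAt (Real.sqrt) (1 / (2 * Real.sqrt (1:ℝ))) (1:ℝ) :=
      Real.hasDerivAt_sqrt one_ne_zero
    rw [← hf0] at hs
    have hcomp := hs.comp 0 hQ
    have heq : (fun ε : ℝ => ‖(inner ℝ (a + ε • c) (a + ε • c) : ℝ) • (b + ε • d) -
          (inner ℝ (b + ε • d) (a + ε • c) : ℝ) • (a + ε • c)‖) =
        (Real.sqrt ∘ fun ε : ℝ => (inner ℝ
          ((inner ℝ (a + ε • c) (a + ε • c) : ℝ) • (b + ε • d) -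
              (inner ℝ (b + ε • d) (a + ε • c) : ℝ) • (a + ε • c))
          ((inner ℝ (a + ε • c) (a + ε • c) : ℝ) • (b + ε • d) -
              (inner ℝ (b + ε • d) (a + ε • c) : ℝ) • (a + ε • c)) : ℝ)) := by
      funext ε
      simp only [Function.comp_apply, real_inner_self_eq_norm_sq]
      rw [Real.sqrt_sq (norm_nonneg _)]
    rw [heq]
    convert hcomp using 1
    · rfl
    · rfl
    rw [hf0]
    simp
  -- denominator
  have hDfun : (fun ε : ℝ => ‖a + ε • c‖ ^ 4) =
      fun ε : ℝ => ((inner ℝ (a + ε • c) (a + ε • c) : ℝ)) ^ 2 := by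
    funext ε
    rw [real_inner_self_eq_norm_sq]
    ring
  have hD : HasDerivAt (fun ε : ℝ => ‖a + ε • c‖ ^ 4) (4 * (inner ℝ a c : ℝ)) 0 := by
    rw [hDfun]
    have := hq.pow 2
    simp only [zero_smul, add_zero, haa] at this
    convert this using 1
    · rfl
    · rfl
    · rfl
    push_cast
    ring
  have hD0 : ‖a + (0:ℝ) • c‖ ^ 4 ≠ 0 := by
    simp [ha1]
  have := hN.div hD hD0
  convert this using 1
  · rfl
  · rfl
  · rfl
  have hden : ‖a + (0:ℝ) • c‖ ^ 4 = 1 := by simp [ha1]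
  have hnum : ‖(inner ℝ (a + (0:ℝ) • c) (a + (0:ℝ) • c) : ℝ) • (b + (0:ℝ) • d) -
      (inner ℝ (b + (0:ℝ) • d) (a + (0:ℝ) • c) : ℝ) • (a + (0:ℝ) • c)‖ = 1 := by
    simp [haa, hba, hb1, ha1]
  rw [hden, hnum, hbw']
  ring
end

section
/- Let γ : [0,L] → ℝⁿ be a C² curve parametrized by arclength with ‖γ''(t)‖ = 1, and V a C² normal vector field along γ (V·γ' ≡ 0). Define γ_ε(t) = γ(t) + εV(t) and the rescaled curve Γ_ε(t) = (L/ℓ(γ_ε)) γ_ε(t), where ℓ denotes arclength. Then d/dε|_{ε=0} κΓ_ε(t) = γ''(t)·V''(t) − 2γ'(t)·V'(t) + (1/L)∫₀ᴸ γ'(u)·V'(u) du. -/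
/-- Derivative of the norm of a curve at a point where it does not vanish. -/
lemma myHasDerivAt_norm {n : ℕ} {f : ℝ → EuclideanSpace ℝ (Fin n)} {f' : EuclideanSpace ℝ (Fin n)}
    {x : ℝ} (hf : HasDerivAt f f' x) (hx : f x ≠ 0) :
    HasDerivAt (fun y => ‖f y‖) ((inner ℝ (f x) f' : ℝ) / ‖f x‖) x := by
  have h1 : (fun y => ‖f y‖) = fun y => Real.sqrt (inner ℝ (f y) (f y) : ℝ) := by
    funext y
    rw [real_inner_self_eq_norm_mul_norm, Real.sqrt_mul_self (norm_nonneg _)]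
  have hinner : HasDerivAt (fun y => (inner ℝ (f y) (f y) : ℝ))
      ((inner ℝ (f x) f' : ℝ) + (inner ℝ f' (f x) : ℝ)) x := hf.inner ℝ hf
  have hne : (inner ℝ (f x) (f x) : ℝ) ≠ 0 := inner_self_ne_zero.mpr hx
  have hs := (Real.hasDerivAt_sqrt hne).comp x hinner
  rw [h1]
  refine hs.congr_deriv ?_
  rw [real_inner_comm f' (f x)]
  have hnorm : Real.sqrt (inner ℝ (f x) (f x) : ℝ) = ‖f x‖ := by
    rw [real_inner_self_eq_norm_mul_norm, Real.sqrt_mul_self (norm_nonneg _)]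
  rw [hnorm]
  have h0 : ‖f x‖ ≠ 0 := norm_ne_zero_iff.mpr hx
  field_simp
  ring

/-- Derivative of the length functional `ε ↦ ∫ ‖G + ε W‖` at `ε = 0` for unit `G`. -/
lemma myLength_deriv {n : ℕ} (L : ℝ) (hL : 0 < L) (G W : ℝ → EuclideanSpace ℝ (Fin n))
    (hcG : Continuous G) (hcW : Continuous W)
    (hunit : ∀ u ∈ Set.Icc (0:ℝ) L, ‖G u‖ = 1) :
    HasDerivAt (fun ε : ℝ => ∫ u in (0:ℝ)..L, ‖G u + ε • W u‖)
      (∫ u in (0:ℝ)..L, (inner ℝ (G u) (W u) : ℝ)) 0 := by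
  obtain ⟨C, hC⟩ := isCompact_Icc.exists_bound_of_continuousOn
    (hcW.continuousOn (s := Set.Icc (0:ℝ) L))
  set M := max C 0 with hM
  have hM0 : 0 ≤ M := le_max_right _ _
  have hCM : ∀ u ∈ Set.Icc (0:ℝ) L, ‖W u‖ ≤ M := fun u hu => (hC u hu).trans (le_max_left _ _)
  set δ : ℝ := 1 / (2 * (M + 1)) with hδdef
  have hδ : 0 < δ := by positivity
  have hδM : δ * M ≤ 1/2 := by
    rw [hδdef, div_mul_eq_mul_div, one_mul, div_le_div_iff₀ (by positivity) (by norm_num)]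
    nlinarith
  have key : ∀ u ∈ Set.Icc (0:ℝ) L, ∀ ε ∈ Metric.ball (0:ℝ) δ, (1:ℝ)/2 ≤ ‖G u + ε • W u‖ := by
    intro u hu ε hε
    have h1 : ‖G u‖ - ‖G u + ε • W u‖ ≤ ‖G u - (G u + ε • W u)‖ := norm_sub_norm_le _ _
    have h2 : ‖G u - (G u + ε • W u)‖ = |ε| * ‖W u‖ := by
      rw [sub_add_cancel_left, norm_neg, norm_smul, Real.norm_eq_abs]
    have hεδ : |ε| < δ := by simpa [Real.dist_eq] using hε
    have h3 : |ε| * ‖W u‖ ≤ δ * M :=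
      mul_le_mul hεδ.le (hCM u hu) (norm_nonneg _) hδ.le
    have := hunit u hu
    nlinarith [norm_nonneg (W u)]
  set F' : ℝ → ℝ → ℝ := fun ε u => (inner ℝ (G u + ε • W u) (W u) : ℝ) / ‖G u + ε • W u‖ with hF'
  have hIoc : Set.uIoc (0:ℝ) L = Set.Ioc 0 L := Set.uIoc_of_le hL.le
  have hsub : Set.Ioc (0:ℝ) L ⊆ Set.Icc 0 L := Set.Ioc_subset_Icc_self
  have main := (intervalIntegral.hasDerivAt_integral_of_dominated_loc_of_deriv_le
    (F := fun ε u => ‖G u + ε • W u‖) (F' := F') (bound := fun _ => M)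
    (μ := MeasureTheory.volume) (a := 0) (b := L) (x₀ := 0) (Metric.ball_mem_nhds 0 hδ)
    (Filter.Eventually.of_forall fun ε =>
      (show Continuous (fun u => ‖G u + ε • W u‖) from (hcG.add (hcW.const_smul ε)).norm).aestronglyMeasurable.restrict)
    ((show Continuous (fun u => ‖G u + (0:ℝ) • W u‖) from (hcG.add (hcW.const_smul (0:ℝ))).norm).intervalIntegrable 0 L)
    (by
      apply AEMeasurable.aestronglyMeasurable
      exact (((hcG.add (hcW.const_smul (0:ℝ))).inner hcW).measurable.div
        ((hcG.add (hcW.const_smul (0:ℝ))).norm.measurable)).aemeasurable)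
    (Filter.Eventually.of_forall (by
      intro u hu ε hε
      have hu' : u ∈ Set.Icc (0:ℝ) L := hsub (hIoc ▸ hu)
      have hk := key u hu' ε hε
      have hpos : (0:ℝ) < ‖G u + ε • W u‖ := lt_of_lt_of_le (by norm_num) hk
      rw [hF']
      simp only [Real.norm_eq_abs, abs_div, abs_norm]
      rw [div_le_iff₀ hpos]
      calc |(inner ℝ (G u + ε • W u) (W u) : ℝ)| ≤ ‖G u + ε • W u‖ * ‖W u‖ :=
            abs_real_inner_le_norm _ _
        _ ≤ ‖G u + ε • W u‖ * M := mul_le_mul_of_nonneg_left (hCM u hu') (norm_nonneg _)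
        _ = M * ‖G u + ε • W u‖ := mul_comm _ _))
    (intervalIntegrable_const)
    (Filter.Eventually.of_forall (by
      intro u hu ε hε
      have hu' : u ∈ Set.Icc (0:ℝ) L := hsub (hIoc ▸ hu)
      have hk := key u hu' ε hε
      have hne : G u + ε • W u ≠ 0 := by
        intro h; rw [h] at hk; simp at hk; linarith
      have hf : HasDerivAt (fun ε : ℝ => G u + ε • W u) (W u) ε := by
        simpa using ((hasDerivAt_id ε).smul_const (W u)).const_add (G u)
      exact myHasDerivAt_norm hf hne))).2
  have heq : (∫ u in (0:ℝ)..L, F' 0 u) = ∫ u in (0:ℝ)..L, (inner ℝ (G u) (W u) : ℝ) := by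
    apply intervalIntegral.integral_congr
    intro u hu
    have hu' : u ∈ Set.Icc (0:ℝ) L := by rwa [Set.uIcc_of_le hL.le] at hu
    rw [hF']
    simp [hunit u hu']
  rwa [heq] at main

/-- First variation of curvature for the length-rescaled normal variation
Γ_ε = (L/ℓ(γ_ε)) γ_ε of a unit-speed curve of constant curvature 1. -/
theorem first_variation_of_curvature_rescaled {n : ℕ} (L : ℝ) (hL : 0 < L)
    (γ V : ℝ → EuclideanSpace ℝ (Fin n))
    (hγ : ContDiff ℝ 2 γ) (hV : ContDiff ℝ 2 V)
    (hunit : ∀ t ∈ Set.Icc (0 : ℝ) L, ‖deriv γ t‖ = 1)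
    (hκ : ∀ t ∈ Set.Icc (0 : ℝ) L, ‖deriv (deriv γ) t‖ = 1)
    (horth : ∀ t ∈ Set.Icc (0 : ℝ) L, (inner ℝ (V t) (deriv γ t) : ℝ) = 0) :
    ∀ t ∈ Set.Icc (0 : ℝ) L,
      HasDerivAt
        (fun ε : ℝ =>
          curv (fun s =>
            (L / ∫ u in (0:ℝ)..L, ‖deriv (fun r => γ r + ε • V r) u‖) •
              (γ s + ε • V s)) t)
        ((inner ℝ (deriv (deriv γ) t) (deriv (deriv V) t) : ℝ)
          - 2 * (inner ℝ (deriv γ t) (deriv V t) : ℝ)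
          + (1 / L) * ∫ u in (0:ℝ)..L, (inner ℝ (deriv γ u) (deriv V u) : ℝ)) 0 := by
  -- regularity facts
  have reg : ∀ f : ℝ → EuclideanSpace ℝ (Fin n), ContDiff ℝ 2 f →
      Differentiable ℝ f ∧ Differentiable ℝ (deriv f) := by
    intro f hf
    have h2 : ContDiff ℝ ((1:ℕ∞)+1) f := by norm_num at hf ⊢; exact hf
    have h1 : ContDiff ℝ 1 (deriv f) := (contDiff_succ_iff_deriv.mp h2).2.2
    exact ⟨hf.differentiable (by norm_num), h1.differentiable (by norm_num)⟩
  obtain ⟨hγd, hγ'd⟩ := reg γ hγ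
  obtain ⟨hVd, hV'd⟩ := reg V hV
  have hcγ' : Continuous (deriv γ) := hγ'd.continuous
  have hcV' : Continuous (deriv V) := hV'd.continuous
  intro t ht
  -- orthogonality of γ'' and γ'
  have horth2 : (inner ℝ (deriv (deriv γ) t) (deriv γ t) : ℝ) = 0 := by
    have hone : ∀ s ∈ Set.Icc (0:ℝ) L,
        (fun s => (inner ℝ (deriv γ s) (deriv γ s) : ℝ)) s = (fun _ => (1:ℝ)) s := by
      intro s hs
      simp only [real_inner_self_eq_norm_mul_norm, hunit s hs]
      norm_num
    have hd : HasDerivAt (fun s => (inner ℝ (deriv γ s) (deriv γ s) : ℝ))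
        ((inner ℝ (deriv γ t) (deriv (deriv γ) t) : ℝ)
          + (inner ℝ (deriv (deriv γ) t) (deriv γ t) : ℝ)) t :=
      (hγ'd t).hasDerivAt.inner ℝ (hγ'd t).hasDerivAt
    have hu : UniqueDiffWithinAt ℝ (Set.Icc (0:ℝ) L) t := (uniqueDiffOn_Icc hL) t ht
    have hc : HasDerivWithinAt (fun s => (inner ℝ (deriv γ s) (deriv γ s) : ℝ)) 0
        (Set.Icc (0:ℝ) L) t :=
      (hasDerivWithinAt_const t _ (1:ℝ)).congr hone (hone t ht)
    have h1 := (hd.hasDerivWithinAt (s := Set.Icc (0:ℝ) L)).derivWithin hu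
    have h2 := hc.derivWithin hu
    have heq := h1.symm.trans h2
    rw [real_inner_comm (deriv γ t) (deriv (deriv γ) t)] at heq
    linarith [heq]
  have hg1 : ‖deriv γ t‖ = 1 := hunit t ht
  have hg2 : ‖deriv (deriv γ) t‖ = 1 := hκ t ht
  have ha0 : (inner ℝ (deriv γ t) (deriv γ t) : ℝ) = 1 := by
    rw [real_inner_self_eq_norm_mul_norm, hg1]; norm_num
  have hg20 : (inner ℝ (deriv (deriv γ) t) (deriv (deriv γ) t) : ℝ) = 1 := by
    rw [real_inner_self_eq_norm_mul_norm, hg2]; norm_num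
  -- derivative of the varied curve
  have hd1 : ∀ (ε u : ℝ), deriv (fun r => γ r + ε • V r) u = deriv γ u + ε • deriv V u := by
    intro ε u
    rw [deriv_fun_add (g := fun y => ε • V y) (hγd u) ((hVd u).const_smul ε), deriv_fun_const_smul ε (hVd u)]
  -- abbreviations
  set p : ℝ := (inner ℝ (deriv γ t) (deriv V t) : ℝ) with hp
  set q : ℝ := (inner ℝ (deriv (deriv γ) t) (deriv (deriv V) t) : ℝ) with hq
  set I : ℝ := ∫ u in (0:ℝ)..L, (inner ℝ (deriv γ u) (deriv V u) : ℝ) with hI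
  set A : ℝ → EuclideanSpace ℝ (Fin n) := fun ε => deriv γ t + ε • deriv V t with hA
  set B : ℝ → EuclideanSpace ℝ (Fin n) :=
    fun ε => deriv (deriv γ) t + ε • deriv (deriv V) t with hB
  set wv : ℝ → EuclideanSpace ℝ (Fin n) :=
    fun ε => (inner ℝ (A ε) (A ε) : ℝ) • B ε - (inner ℝ (B ε) (A ε) : ℝ) • A ε with hwv
  set ℓ2 : ℝ → ℝ := fun ε => ∫ u in (0:ℝ)..L, ‖deriv γ u + ε • deriv V u‖ with hℓ2
  have hA0 : A 0 = deriv γ t := by rw [hA]; simp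
  have hB0 : B 0 = deriv (deriv γ) t := by rw [hB]; simp
  have hw0 : wv 0 = deriv (deriv γ) t := by
    simp only [hwv, hA0, hB0, ha0, horth2, one_smul, zero_smul, sub_zero]
  have hl0 : ℓ2 0 = L := by
    rw [hℓ2]
    simp only [zero_smul, add_zero]
    rw [intervalIntegral.integral_congr (g := fun _ => (1:ℝ))
      (fun u hu => hunit u (by rwa [Set.uIcc_of_le hL.le] at hu))]
    simp
  -- the model function and its derivative
  set Gfun : ℝ → ℝ := fun ε => (ℓ2 ε / L) *
    (Real.sqrt (inner ℝ (wv ε) (wv ε) : ℝ) / ((inner ℝ (A ε) (A ε) : ℝ))^2) with hGfun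
  have hAd : HasDerivAt A (deriv V t) 0 := by
    rw [hA]
    simpa using ((hasDerivAt_id (0:ℝ)).smul_const (deriv V t)).const_add (deriv γ t)
  have hBd : HasDerivAt B (deriv (deriv V) t) 0 := by
    rw [hB]
    simpa using ((hasDerivAt_id (0:ℝ)).smul_const (deriv (deriv V) t)).const_add
      (deriv (deriv γ) t)
  have hadAA : HasDerivAt (fun ε => (inner ℝ (A ε) (A ε) : ℝ)) (2 * p) 0 := by
    have h := hAd.inner ℝ hAd
    refine h.congr_deriv ?_
    rw [hA0, hp, real_inner_comm (deriv V t) (deriv γ t)]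
    ring
  have hadBA : HasDerivAt (fun ε => (inner ℝ (B ε) (A ε) : ℝ))
      ((inner ℝ (deriv (deriv γ) t) (deriv V t) : ℝ)
        + (inner ℝ (deriv (deriv V) t) (deriv γ t) : ℝ)) 0 := by
    have h := hBd.inner ℝ hAd
    rwa [hA0, hB0] at h
  have hwd : HasDerivAt wv
      (((inner ℝ (A 0) (A 0) : ℝ) • deriv (deriv V) t + (2 * p) • B 0)
        - ((inner ℝ (B 0) (A 0) : ℝ) • deriv V t
            + ((inner ℝ (deriv (deriv γ) t) (deriv V t) : ℝ)
              + (inner ℝ (deriv (deriv V) t) (deriv γ t) : ℝ)) • A 0)) 0 :=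
    (hadAA.smul hBd).sub (hadBA.smul hAd)
  set wv' : EuclideanSpace ℝ (Fin n) :=
    deriv (deriv V) t + (2 * p) • deriv (deriv γ) t
      - ((inner ℝ (deriv (deriv γ) t) (deriv V t) : ℝ)
          + (inner ℝ (deriv (deriv V) t) (deriv γ t) : ℝ)) • deriv γ t with hwv'
  have hwd' : HasDerivAt wv wv' 0 := by
    convert hwd using 1
    rw [hwv', hA0, hB0, ha0, horth2]
    simp
  have hkey : (inner ℝ (deriv (deriv γ) t) wv' : ℝ) = q + 2 * p := by
    rw [hwv']
    simp only [inner_add_right, inner_sub_right, real_inner_smul_right]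
    rw [hg20, horth2, hq]
    ring
  have hgd : HasDerivAt (fun ε => (inner ℝ (wv ε) (wv ε) : ℝ)) (2 * (q + 2 * p)) 0 := by
    have h := hwd'.inner ℝ hwd'
    refine h.congr_deriv ?_
    rw [hw0]
    linarith [hkey, real_inner_comm wv' (deriv (deriv γ) t)]
  have hwv00 : (inner ℝ (wv 0) (wv 0) : ℝ) = 1 := by rw [hw0]; exact hg20
  have hsqrt : HasDerivAt (fun ε => Real.sqrt (inner ℝ (wv ε) (wv ε) : ℝ)) (q + 2 * p) 0 := by
    have h := (Real.hasDerivAt_sqrt (by rw [hwv00]; norm_num)).comp 0 hgd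
    refine h.congr_deriv ?_
    rw [hwv00, Real.sqrt_one]
    ring
  have hden : HasDerivAt (fun ε => ((inner ℝ (A ε) (A ε) : ℝ))^2) (4 * p) 0 := by
    have h := hadAA.pow 2
    refine h.congr_deriv ?_
    rw [hA0, ha0]
    ring
  have hquot : HasDerivAt
      (fun ε => Real.sqrt (inner ℝ (wv ε) (wv ε) : ℝ) / ((inner ℝ (A ε) (A ε) : ℝ))^2)
      (q - 2 * p) 0 := by
    have hne : ((inner ℝ (A 0) (A 0) : ℝ))^2 ≠ 0 := by rw [hA0, ha0]; norm_num
    have h := hsqrt.div hden hne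
    refine h.congr_deriv ?_
    rw [hwv00, Real.sqrt_one, hA0, ha0]
    ring
  have hldint : HasDerivAt ℓ2 I 0 := by
    rw [hℓ2, hI]
    exact myLength_deriv L hL (deriv γ) (deriv V) hcγ' hcV' hunit
  have hld : HasDerivAt (fun ε => ℓ2 ε / L) (I / L) 0 := hldint.div_const L
  have hGd : HasDerivAt Gfun (q - 2 * p + (1 / L) * I) 0 := by
    rw [hGfun]
    have h := hld.mul hquot
    refine h.congr_deriv ?_
    rw [hl0, hwv00, Real.sqrt_one, hA0, ha0]
    field_simp
    ring
  -- eventual positivity of the length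
  have hpos : ∀ᶠ ε in nhds (0:ℝ), 0 < ℓ2 ε := by
    have hcont : Filter.Tendsto ℓ2 (nhds 0) (nhds (ℓ2 0)) := hldint.continuousAt
    have h0 : (0:ℝ) < ℓ2 0 := by rw [hl0]; exact hL
    exact hcont.eventually (eventually_gt_nhds h0)
  -- eventual equality of the two functions
  apply hGd.congr_of_eventuallyEq
  filter_upwards [hpos] with ε hℓ
  rw [hℓ2] at hℓ
  simp only at hℓ
  set ℓε : ℝ := ∫ u in (0:ℝ)..L, ‖deriv γ u + ε • deriv V u‖ with hℓε
  set c : ℝ := L / ℓε with hcdef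
  have hc : 0 < c := div_pos hL hℓ
  have hdc1 : ∀ u, deriv (fun s => c • (γ s + ε • V s)) u
      = c • (deriv γ u + ε • deriv V u) := by
    intro u
    rw [deriv_fun_const_smul (f := fun s => γ s + ε • V s) c ((hγd u).add ((hVd u).const_smul ε)), hd1 ε u]
  have hdc2 : deriv (deriv (fun s => c • (γ s + ε • V s))) t
      = c • (deriv (deriv γ) t + ε • deriv (deriv V) t) := by
    have hfn : deriv (fun s => c • (γ s + ε • V s))
        = fun u => c • (deriv γ u + ε • deriv V u) := funext hdc1
    rw [hfn, deriv_fun_const_smul (f := fun u => deriv γ u + ε • deriv V u) c ((hγ'd t).add ((hV'd t).const_smul ε)),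
      deriv_fun_add (g := fun y => ε • deriv V y) (hγ'd t) ((hV'd t).const_smul ε), deriv_fun_const_smul ε (hV'd t)]
  show curv (fun s =>
      (L / ∫ u in (0:ℝ)..L, ‖deriv (fun r => γ r + ε • V r) u‖) • (γ s + ε • V s)) t = Gfun ε
  have hintg : (∫ u in (0:ℝ)..L, ‖deriv (fun r => γ r + ε • V r) u‖) = ℓε := by
    rw [hℓε]
    congr 1
    funext u
    rw [hd1 ε u]
  rw [curv, hintg, ← hcdef, hdc1 t, hdc2]
  have hvec : (inner ℝ (c • A ε) (c • A ε) : ℝ) • (c • B ε)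
      - (inner ℝ (c • B ε) (c • A ε) : ℝ) • (c • A ε) = (c^3) • wv ε := by
    rw [hwv]
    simp only [real_inner_smul_left, real_inner_smul_right, smul_smul, smul_sub]
    module
  have hAe : deriv γ t + ε • deriv V t = A ε := by rw [hA]
  have hBe : deriv (deriv γ) t + ε • deriv (deriv V) t = B ε := by rw [hB]
  rw [hAe, hBe, hvec, norm_smul, norm_smul, Real.norm_eq_abs, Real.norm_eq_abs,
    abs_of_pos (pow_pos hc 3), abs_of_pos hc]
  have hZ : Real.sqrt (inner ℝ (wv ε) (wv ε) : ℝ) = ‖wv ε‖ := by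
    rw [real_inner_self_eq_norm_mul_norm, Real.sqrt_mul_self (norm_nonneg _)]
  have hX : ((inner ℝ (A ε) (A ε) : ℝ))^2 = ‖A ε‖^4 := by
    rw [real_inner_self_eq_norm_sq]; ring
  rw [hGfun]
  simp only
  rw [hZ, hX]
  rcases eq_or_ne (‖A ε‖) 0 with hX0 | hX0
  · simp [hX0, hc.ne']
  · have hLne : L ≠ 0 := hL.ne'
    have hℓne : ℓε ≠ 0 := hℓ.ne'
    rw [hcdef]
    field_simp
    ring
end

section
/- Let γ : ℝ/Lℤ → ℝⁿ be a C⁴ closed curve parametrized by arclength with constant curvature 1 and positive torsion τ(t) > 0 everywhere, and let N(t) = γ''(t) be the principal normal. For the normal variation γ_ε = γ + εN rescaled to constant length, Γ_ε(t) = (L/ℓ(γ_ε))γ_ε(t), one has d/dε|_{ε=0} κΓ_ε(t) = −τ(t)² < 0 for every t. -/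
open RealInnerProductSpace
set_option maxHeartbeats 4000000

theorem hasDerivAt_norm_aux {F : Type*} [NormedAddCommGroup F] [InnerProductSpace ℝ F]
    {f : ℝ → F} {f' : F} {x : ℝ} (hf : HasDerivAt f f' x)
    (h0 : f x ≠ 0) : HasDerivAt (fun y => ‖f y‖) (⟪f x, f'⟫ / ‖f x‖) x := by
  have h1 := hf.norm_sq
  have h2 := h1.sqrt (pow_ne_zero 2 (norm_ne_zero_iff.mpr h0))
  have he : (fun y => Real.sqrt (‖f y‖ ^ 2)) = fun y => ‖f y‖ := by
    funext y; exact Real.sqrt_sq (norm_nonneg _)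
  rw [he] at h2
  convert h2 using 1
  rw [Real.sqrt_sq (norm_nonneg _)]
  ring

theorem inner_const_deriv_aux {F : Type*} [NormedAddCommGroup F] [InnerProductSpace ℝ F]
    {f g : ℝ → F} {f' g' : F} {s : ℝ} {c : ℝ}
    (hf : HasDerivAt f f' s) (hg : HasDerivAt g g' s) (h : ∀ u, ⟪f u, g u⟫ = c) :
    ⟪f s, g'⟫ + ⟪f', g s⟫ = 0 := by
  have h1 := hf.inner ℝ hg
  have h2 : (fun u => ⟪f u, g u⟫) = fun _ => c := funext h
  rw [h2] at h1
  exact h1.unique (hasDerivAt_const s c)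

set_option maxHeartbeats 1000000 in
theorem deriv_G_aux {F : Type*} [NormedAddCommGroup F] [InnerProductSpace ℝ F]
    (a b p q : F) (ℓ : ℝ → ℝ) (L : ℝ) (hL : L ≠ 0)
    (hℓD : HasDerivAt ℓ (-L) 0) (hℓ0 : ℓ 0 = L)
    (iTT : ⟪a, a⟫ = 1) (iNT : ⟪p, a⟫ = 0) (iPT : ⟪b, a⟫ = -1) (iPN : ⟪b, p⟫ = 0)
    (iQT : ⟪q, a⟫ = 0) (iQN : ⟪q, p⟫ = -⟪b, b⟫) (hNn : ‖p‖ = 1) :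
    HasDerivAt (fun ε : ℝ => ℓ ε / L *
      (‖(⟪a + ε • b, a + ε • b⟫ : ℝ) • (p + ε • q) -
          (⟪p + ε • q, a + ε • b⟫ : ℝ) • (a + ε • b)‖ / ‖a + ε • b‖ ^ 4))
      (1 - ⟪b, b⟫) 0 := by
  have ha1 : ‖a‖ = 1 := by
    have := real_inner_self_eq_norm_sq a
    nlinarith [norm_nonneg a]
  have hane : a ≠ 0 := by
    intro h; rw [h] at ha1; simp at ha1
  have hpne : p ≠ 0 := by
    intro h; rw [h] at hNn; simp at hNn
  have hv : HasDerivAt (fun ε : ℝ => a + ε • b) b 0 := by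
    simpa using ((hasDerivAt_id (0:ℝ)).smul_const b).const_add a
  have hw : HasDerivAt (fun ε : ℝ => p + ε • q) q 0 := by
    simpa using ((hasDerivAt_id (0:ℝ)).smul_const q).const_add p
  -- the unnormalized vector
  have hU : HasDerivAt (fun ε : ℝ =>
      (⟪a + ε • b, a + ε • b⟫ : ℝ) • (p + ε • q) -
        (⟪p + ε • q, a + ε • b⟫ : ℝ) • (a + ε • b)) (q - (2:ℝ) • p) 0 := by
    have h1 := ((hv.inner ℝ hv).smul hw).sub ((hw.inner ℝ hv).smul hv)
    convert h1 using 1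
    · rfl
    simp only [zero_smul, add_zero, iTT, iNT, iPT, iPN, iQT, iQN]
    rw [real_inner_comm b a, real_inner_comm b p]
    simp only [iPT, iPN]
    module
  have hA : HasDerivAt (fun ε : ℝ =>
      ‖(⟪a + ε • b, a + ε • b⟫ : ℝ) • (p + ε • q) -
        (⟪p + ε • q, a + ε • b⟫ : ℝ) • (a + ε • b)‖) (-⟪b, b⟫ - 2) 0 := by
    have h2 := hasDerivAt_norm_aux hU (by simp [iTT, iNT, hpne, hane])
    convert h2 using 1
    simp only [zero_smul, add_zero, iTT, iNT, one_smul, zero_smul, sub_zero]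
    rw [hNn, inner_sub_right, real_inner_comm q p, iQN, real_inner_smul_right]
    rw [real_inner_self_eq_norm_sq, real_inner_self_eq_norm_sq, hNn]
    ring
  have hB : HasDerivAt (fun ε : ℝ => ‖a + ε • b‖ ^ 4) (-4) 0 := by
    have hn : HasDerivAt (fun ε : ℝ => ‖a + ε • b‖) (-1) 0 := by
      have := hasDerivAt_norm_aux hv (by simpa using hane)
      convert this using 1
      simp [ha1]
      rw [real_inner_comm, iPT]
    have := hn.pow 4
    convert this using 1
    · rfl
    · rfl
    · rfl
    simp [ha1]
  have hG := (hℓD.div_const L).mul (hA.div hB (by simp [ha1]))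
  convert hG using 1
  · rfl
  · rfl
  · rfl
  simp only [zero_smul, add_zero, iTT, iNT, one_smul, zero_smul, sub_zero, hℓ0]
  simp [hNn, ha1, iNT]
  field_simp
  ring


/-- For a closed unit-speed C⁴ curve of constant curvature 1 and positive torsion,
the rescaled normal variation Γ_ε = (L/ℓ(γ+εN))·(γ+εN) along the principal
normal N = γ'' satisfies d/dε|₀ κΓ_ε(t) = −τ(t)² < 0. -/
theorem normal_variation_decreases_curvature {n : ℕ} (L : ℝ) (hL : 0 < L)
    (γ : ℝ → EuclideanSpace ℝ (Fin n)) (hγ : ContDiff ℝ 4 γ)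
    (hper : Function.Periodic γ L)
    (hunit : ∀ t, ‖deriv γ t‖ = 1)
    (hκ : ∀ t, ‖deriv (deriv γ) t‖ = 1)
    (hτ : ∀ t, 0 < ‖deriv (deriv (deriv γ)) t + deriv γ t‖) :
    ∀ t : ℝ,
      HasDerivAt
        (fun ε : ℝ =>
          curv (fun s =>
            (L / ∫ u in (0:ℝ)..L,
                ‖deriv (fun r => γ r + ε • deriv (deriv γ) r) u‖) •
              (γ s + ε • deriv (deriv γ) s)) t)
        (-(‖deriv (deriv (deriv γ)) t + deriv γ t‖ ^ 2)) 0 ∧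
      -(‖deriv (deriv (deriv γ)) t + deriv γ t‖ ^ 2) < 0 := by
  intro t
  -- smoothness
  have h1 : ContDiff ℝ 3 (deriv γ) :=
    (contDiff_succ_iff_deriv.mp (show ContDiff ℝ (3+1) γ by norm_num [hγ])).2.2
  have h2 : ContDiff ℝ 2 (deriv (deriv γ)) :=
    (contDiff_succ_iff_deriv.mp (show ContDiff ℝ (2+1) (deriv γ) by norm_num [h1])).2.2
  have h3 : ContDiff ℝ 1 (deriv (deriv (deriv γ))) :=
    (contDiff_succ_iff_deriv.mp
      (show ContDiff ℝ (1+1) (deriv (deriv γ)) by norm_num [h2])).2.2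
  have d0 : Differentiable ℝ γ := hγ.differentiable (by norm_num)
  have d1 : Differentiable ℝ (deriv γ) := h1.differentiable (by norm_num)
  have d2 : Differentiable ℝ (deriv (deriv γ)) := h2.differentiable (by norm_num)
  have d3 : Differentiable ℝ (deriv (deriv (deriv γ))) := h3.differentiable (by norm_num)
  set T := deriv γ with hTdef
  set N := deriv T with hNdef
  set P := deriv N with hPdef
  set Q := deriv P with hQdef
  -- pointwise identities
  have iTT : ∀ u, ⟪T u, T u⟫ = 1 := fun u => by
    rw [real_inner_self_eq_norm_sq, hunit]; norm_num
  have iNN : ∀ u, ⟪N u, N u⟫ = 1 := fun u => by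
    rw [real_inner_self_eq_norm_sq, hκ]; norm_num
  have iNT : ∀ u, ⟪N u, T u⟫ = 0 := by
    intro u
    have h := inner_const_deriv_aux (d1 u).hasDerivAt (d1 u).hasDerivAt iTT
    simp only [← hNdef, real_inner_comm (T u) (N u)] at h
    rw [real_inner_comm]; linarith
  have iPT : ∀ u, ⟪P u, T u⟫ = -1 := by
    intro u
    have h := inner_const_deriv_aux (d2 u).hasDerivAt (d1 u).hasDerivAt iNT
    simp only [← hNdef, ← hPdef] at h
    rw [iNN u] at h; linarith
  have iPN : ∀ u, ⟪P u, N u⟫ = 0 := by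
    intro u
    have h := inner_const_deriv_aux (d2 u).hasDerivAt (d2 u).hasDerivAt iNN
    simp only [← hNdef, ← hPdef, real_inner_comm (N u) (P u)] at h
    rw [real_inner_comm]; linarith
  have iQT : ⟪Q t, T t⟫ = 0 := by
    have h := inner_const_deriv_aux (d3 t).hasDerivAt (d1 t).hasDerivAt iPT
    simp only [← hNdef, ← hPdef, ← hQdef] at h
    rw [iPN t] at h; linarith
  have iQN : ⟪Q t, N t⟫ = -⟪P t, P t⟫ := by
    have h := inner_const_deriv_aux (d3 t).hasDerivAt (d2 t).hasDerivAt iPN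
    simp only [← hNdef, ← hPdef, ← hQdef] at h
    linarith
  -- rewrite the inner derivative
  have hderiv_fun : ∀ (ε : ℝ) (u : ℝ),
      deriv (fun r => γ r + ε • N r) u = T u + ε • P u := fun ε u =>
    ((d0 u).hasDerivAt.add ((d2 u).hasDerivAt.const_smul ε)).deriv
  simp only [hderiv_fun]
  -- the length function
  set ℓ : ℝ → ℝ := fun ε => ∫ u in (0:ℝ)..L, ‖T u + ε • P u‖ with hℓdef
  -- bound on P over [0, L]
  obtain ⟨C, hC⟩ : ∃ C, ∀ u ∈ Set.uIcc (0:ℝ) L, ‖P u‖ ≤ C :=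
    isCompact_uIcc.exists_bound_of_continuousOn h3.continuous.continuousOn
  have hC0 : 0 ≤ C := le_trans (norm_nonneg _) (hC 0 (by simp))
  set δ : ℝ := (2 * (C + 1))⁻¹ with hδdef
  have hδpos : 0 < δ := by positivity
  have hδC : δ * C ≤ 1 / 2 := by
    rw [hδdef]
    rw [inv_mul_le_iff₀ (by positivity)]
    nlinarith
  have hlow : ∀ ε ∈ Metric.ball (0:ℝ) δ, ∀ u ∈ Set.uIcc (0:ℝ) L,
      (1:ℝ)/2 ≤ ‖T u + ε • P u‖ := by
    intro ε hε u hu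
    have h1' : ‖ε • P u‖ ≤ δ * C := by
      have hab : |ε| ≤ δ := le_of_lt (by simpa using hε)
      rw [norm_smul, Real.norm_eq_abs]
      exact mul_le_mul hab (hC u hu) (norm_nonneg _) hδpos.le
    have h2' : ‖T u‖ ≤ ‖T u + ε • P u‖ + ‖ε • P u‖ := by
      have h3' := norm_sub_le (T u + ε • P u) (ε • P u)
      simpa using h3'
    have := hunit u
    linarith
  -- continuity
  have contTP : ∀ ε : ℝ, Continuous fun u => T u + ε • P u :=
    fun ε => h1.continuous.add (h3.continuous.const_smul ε)
  -- derivative of the length function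
  have hmeas : ∀ᶠ x in nhds (0:ℝ), MeasureTheory.AEStronglyMeasurable
      (fun u => ‖T u + x • P u‖) (MeasureTheory.volume.restrict (Set.uIoc (0:ℝ) L)) :=
    Filter.Eventually.of_forall fun x => ((contTP x).norm).aestronglyMeasurable
  have hint : IntervalIntegrable (fun u => ‖T u + (0:ℝ) • P u‖) MeasureTheory.volume 0 L :=
    ((contTP 0).norm).intervalIntegrable _ _
  have hmeas' : MeasureTheory.AEStronglyMeasurable
      (fun u => (⟪T u + (0:ℝ) • P u, P u⟫ : ℝ) / ‖T u + (0:ℝ) • P u‖)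
      (MeasureTheory.volume.restrict (Set.uIoc (0:ℝ) L)) := by
    apply Continuous.aestronglyMeasurable
    refine Continuous.div ((contTP 0).inner h3.continuous) (contTP 0).norm ?_
    intro u; simp [hunit u]
  have hbound : ∀ᵐ u ∂MeasureTheory.volume, u ∈ Set.uIoc (0:ℝ) L →
      ∀ x ∈ Metric.ball (0:ℝ) δ,
        ‖(⟪T u + x • P u, P u⟫ : ℝ) / ‖T u + x • P u‖‖ ≤ C := by
    apply MeasureTheory.ae_of_all
    intro u hu x hx
    have hu' : u ∈ Set.uIcc (0:ℝ) L := Set.Ioc_subset_Icc_self hu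
    have hv := hlow x hx u hu'
    have hvpos : (0:ℝ) < ‖T u + x • P u‖ := by linarith
    rw [Real.norm_eq_abs, abs_div, abs_of_pos hvpos, div_le_iff₀ hvpos]
    calc |(⟪T u + x • P u, P u⟫ : ℝ)| ≤ ‖T u + x • P u‖ * ‖P u‖ :=
          abs_real_inner_le_norm _ _
      _ ≤ ‖T u + x • P u‖ * C := mul_le_mul_of_nonneg_left (hC u hu') hvpos.le
      _ = C * ‖T u + x • P u‖ := mul_comm _ _
  have hbint : IntervalIntegrable (fun _ : ℝ => C) MeasureTheory.volume 0 L :=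
    intervalIntegrable_const
  have hdiff : ∀ᵐ u ∂MeasureTheory.volume, u ∈ Set.uIoc (0:ℝ) L →
      ∀ x ∈ Metric.ball (0:ℝ) δ,
        HasDerivAt (fun ε => ‖T u + ε • P u‖)
          ((⟪T u + x • P u, P u⟫ : ℝ) / ‖T u + x • P u‖) x := by
    apply MeasureTheory.ae_of_all
    intro u hu x hx
    have hu' : u ∈ Set.uIcc (0:ℝ) L := Set.Ioc_subset_Icc_self hu
    have hv := hlow x hx u hu'
    have hne : T u + x • P u ≠ 0 := by
      intro hcontr; rw [hcontr] at hv; simp at hv; linarith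
    have hf : HasDerivAt (fun ε : ℝ => T u + ε • P u) (P u) x := by
      simpa using ((hasDerivAt_id x).smul_const (P u)).const_add (T u)
    exact hasDerivAt_norm_aux hf hne
  obtain ⟨-, hkey⟩ := intervalIntegral.hasDerivAt_integral_of_dominated_loc_of_deriv_le
      (Metric.ball_mem_nhds 0 hδpos) hmeas hint hmeas' hbound hbint hdiff
  have hint_eq : (∫ u in (0:ℝ)..L, (⟪T u + (0:ℝ) • P u, P u⟫ : ℝ) / ‖T u + (0:ℝ) • P u‖)
      = -L := by
    have heq : (fun u => (⟪T u + (0:ℝ) • P u, P u⟫ : ℝ) / ‖T u + (0:ℝ) • P u‖)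
        = fun _ : ℝ => (-1:ℝ) := by
      funext u
      rw [zero_smul, add_zero, hunit u, real_inner_comm, iPT u]
      norm_num
    rw [heq, intervalIntegral.integral_const]
    simp
  rw [hint_eq] at hkey
  have hℓD : HasDerivAt ℓ (-L) 0 := hkey
  have hℓ0 : ℓ 0 = L := by
    have heq : (fun u => ‖T u + (0:ℝ) • P u‖) = fun _ : ℝ => (1:ℝ) := by
      funext u; simp [hunit u]
    show (∫ u in (0:ℝ)..L, ‖T u + (0:ℝ) • P u‖) = L
    rw [heq, intervalIntegral.integral_const]
    simp
  -- explicit formula for curvature of the rescaled curve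
  have hcurv_eq : ∀ ε : ℝ, T t + ε • P t ≠ 0 →
      0 < (∫ u in (0:ℝ)..L, ‖T u + ε • P u‖) →
      curv (fun s => (L / ∫ u in (0:ℝ)..L, ‖T u + ε • P u‖) • (γ s + ε • N s)) t
        = (∫ u in (0:ℝ)..L, ‖T u + ε • P u‖) / L *
          (‖(⟪T t + ε • P t, T t + ε • P t⟫ : ℝ) • (N t + ε • Q t) -
              (⟪N t + ε • Q t, T t + ε • P t⟫ : ℝ) • (T t + ε • P t)‖
            / ‖T t + ε • P t‖ ^ 4) := by
    intro ε hvne hIpos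
    set c : ℝ := L / ∫ u in (0:ℝ)..L, ‖T u + ε • P u‖ with hcdef
    have hc : 0 < c := div_pos hL hIpos
    have hd1 : deriv (fun s => c • (γ s + ε • N s)) = fun s => c • (T s + ε • P s) :=
      funext fun s =>
        (((d0 s).hasDerivAt.add ((d2 s).hasDerivAt.const_smul ε)).const_smul c).deriv
    have hd2 : deriv (fun s => c • (T s + ε • P s)) t = c • (N t + ε • Q t) :=
      (((d1 t).hasDerivAt.add ((d3 t).hasDerivAt.const_smul ε)).const_smul c).deriv
    unfold curv
    rw [hd1, hd2]
    have hsm : (⟪c • (T t + ε • P t), c • (T t + ε • P t)⟫ : ℝ) • (c • (N t + ε • Q t)) -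
        (⟪c • (N t + ε • Q t), c • (T t + ε • P t)⟫ : ℝ) • (c • (T t + ε • P t))
        = (c * c * c) • ((⟪T t + ε • P t, T t + ε • P t⟫ : ℝ) • (N t + ε • Q t) -
            (⟪N t + ε • Q t, T t + ε • P t⟫ : ℝ) • (T t + ε • P t)) := by
      simp only [real_inner_smul_left, real_inner_smul_right]
      module
    rw [hsm, norm_smul, norm_smul]
    rw [Real.norm_eq_abs, abs_of_pos (by positivity : (0:ℝ) < c * c * c),
      Real.norm_eq_abs, abs_of_pos hc]
    have hvn : ‖T t + ε • P t‖ ≠ 0 := norm_ne_zero_iff.mpr hvne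
    rw [hcdef]
    field_simp
  -- smallness neighborhood also valid at the point t
  set δ2 : ℝ := min δ ((2 * (‖P t‖ + 1))⁻¹) with hδ2def
  have hδ2pos : 0 < δ2 := lt_min hδpos (by positivity)
  have hlow2 : ∀ ε : ℝ, |ε| < δ2 → (1:ℝ)/2 ≤ ‖T t + ε • P t‖ := by
    intro ε hε
    have h1' : ‖ε • P t‖ ≤ (2 * (‖P t‖ + 1))⁻¹ * ‖P t‖ := by
      rw [norm_smul, Real.norm_eq_abs]
      exact mul_le_mul (le_of_lt (lt_of_lt_of_le hε (min_le_right _ _))) le_rfl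
        (norm_nonneg _) (by positivity)
    have hfrac : (2 * (‖P t‖ + 1))⁻¹ * ‖P t‖ ≤ 1/2 := by
      rw [inv_mul_le_iff₀ (by positivity)]
      nlinarith [norm_nonneg (P t)]
    have h2' : ‖T t‖ ≤ ‖T t + ε • P t‖ + ‖ε • P t‖ := by
      have h3' := norm_sub_le (T t + ε • P t) (ε • P t)
      simpa using h3'
    have := hunit t
    linarith
  have hvne2 : ∀ ε : ℝ, |ε| < δ2 → T t + ε • P t ≠ 0 := by
    intro ε hε hcontr
    have := hlow2 ε hε
    rw [hcontr] at this
    simp at this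
    linarith
  have hIpos2 : ∀ ε : ℝ, |ε| < δ2 → 0 < ∫ u in (0:ℝ)..L, ‖T u + ε • P u‖ := by
    intro ε hε
    have hεball : ε ∈ Metric.ball (0:ℝ) δ := by
      simp only [Metric.mem_ball, Real.dist_eq, sub_zero]
      exact lt_of_lt_of_le hε (min_le_left _ _)
    have hmono := intervalIntegral.integral_mono_on (μ := MeasureTheory.volume) (le_of_lt hL)
      (intervalIntegrable_const (c := (1/2:ℝ))) ((contTP ε).norm.intervalIntegrable 0 L)
      (fun u hu => hlow ε hεball u (by rw [Set.uIcc_of_le hL.le]; exact hu))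
    have h4' : (0:ℝ) < L * (1/2) := by linarith
    calc (0:ℝ) < L * (1/2) := h4'
      _ = ∫ _ in (0:ℝ)..L, (1/2:ℝ) := by
          rw [intervalIntegral.integral_const]; simp [smul_eq_mul, mul_comm]
      _ ≤ _ := hmono
  -- eventual equality with the explicit formula
  have hEq : (fun ε : ℝ => curv
      (fun s => (L / ∫ u in (0:ℝ)..L, ‖T u + ε • P u‖) • (γ s + ε • N s)) t)
      =ᶠ[nhds (0:ℝ)] (fun ε : ℝ => ℓ ε / L *
        (‖(⟪T t + ε • P t, T t + ε • P t⟫ : ℝ) • (N t + ε • Q t) -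
            (⟪N t + ε • Q t, T t + ε • P t⟫ : ℝ) • (T t + ε • P t)‖
          / ‖T t + ε • P t‖ ^ 4)) := by
    filter_upwards [Metric.ball_mem_nhds (0:ℝ) hδ2pos] with ε hε
    have hε' : |ε| < δ2 := by
      simpa only [Metric.mem_ball, Real.dist_eq, sub_zero] using hε
    exact hcurv_eq ε (hvne2 ε hε') (hIpos2 ε hε')
  have hG := deriv_G_aux (T t) (P t) (N t) (Q t) ℓ L hL.ne' hℓD hℓ0
    (iTT t) (iNT t) (iPT t) (iPN t) iQT iQN (hκ t)
  have hτsq : ‖P t + T t‖ ^ 2 = ⟪P t, P t⟫ - 1 := by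
    rw [norm_add_sq_real, hunit t, iPT t, real_inner_self_eq_norm_sq]
    ring
  constructor
  · have hfin := hG.congr_of_eventuallyEq hEq
    convert hfin using 1
    · rfl
    · rfl
    rw [hτsq]
    ring
  · nlinarith [hτ t]
end

section
/- Let γ : ℝ/Lℤ → ℝⁿ be a C⁴ closed curve with constant curvature 1 and torsion bounded below by τ₀ > 0, and let Γ_ε be the rescaled normal variation as above. Then there exists ε₀ > 0 such that for all ε ∈ (0, ε₀) and all t, κΓ_ε(t) < 1; in particular sup_t κΓ_ε(t) < 1 for all such ε. -/
section Helpers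

variable {E : Type*} [NormedAddCommGroup E] [InnerProductSpace ℝ E]

lemma periodic_deriv'' {f : ℝ → E} {L : ℝ} (h : Function.Periodic f L) :
    Function.Periodic (deriv f) L := by
  intro t
  have hfe : (fun x => f (x + L)) = f := funext fun x => h x
  calc deriv f (t + L) = deriv (fun x => f (x + L)) t := (deriv_comp_add_const f L t).symm
    _ = deriv f t := by rw [hfe]

lemma bound_of_periodic {f : ℝ → E} {L : ℝ} (hL : 0 < L) (hf : Continuous f)
    (h : Function.Periodic f L) : ∃ C, 0 ≤ C ∧ ∀ t, ‖f t‖ ≤ C := by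
  obtain ⟨C, hC⟩ := (isCompact_Icc (a := (0:ℝ)) (b := L)).exists_bound_of_continuousOn
    hf.continuousOn
  refine ⟨max C 0, le_max_right _ _, fun t => ?_⟩
  obtain ⟨y, hy, hfy⟩ := h.exists_mem_Ico₀ hL t
  rw [hfy]
  exact le_trans (hC y ⟨hy.1, hy.2.le⟩) (le_max_left _ _)

lemma deriv_const_inner {f g f' g' : ℝ → E} {c : ℝ}
    (hf : ∀ t, HasDerivAt f (f' t) t) (hg : ∀ t, HasDerivAt g (g' t) t)
    (hconst : ∀ t, (inner ℝ (f t) (g t) : ℝ) = c) (t : ℝ) :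
    (inner ℝ (f t) (g' t) : ℝ) + (inner ℝ (f' t) (g t) : ℝ) = 0 := by
  have h1 : HasDerivAt (fun s => (inner ℝ (f s) (g s) : ℝ))
      ((inner ℝ (f t) (g' t) : ℝ) + (inner ℝ (f' t) (g t) : ℝ)) t :=
    HasDerivAt.inner ℝ (hf t) (hg t)
  have h2 : HasDerivAt (fun s => (inner ℝ (f s) (g s) : ℝ)) 0 t := by
    have he : (fun s => (inner ℝ (f s) (g s) : ℝ)) = fun _ => c := funext hconst
    rw [he]; exact hasDerivAt_const t c
  exact h1.unique h2

end Helpers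

lemma curv_eq' {n : ℕ} {Γ v a : ℝ → EuclideanSpace ℝ (Fin n)} (c : ℝ) (hc : 0 < c)
    (hv : ∀ t, HasDerivAt Γ (v t) t) (ha : ∀ t, HasDerivAt v (a t) t) (t : ℝ) :
    (‖(inner ℝ (deriv (fun s => c • Γ s) t) (deriv (fun s => c • Γ s) t) : ℝ) •
        deriv (deriv (fun s => c • Γ s)) t -
      (inner ℝ (deriv (deriv (fun s => c • Γ s)) t) (deriv (fun s => c • Γ s) t) : ℝ) •
        deriv (fun s => c • Γ s) t‖ / ‖deriv (fun s => c • Γ s) t‖ ^ 4) =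
      ‖(inner ℝ (v t) (v t) : ℝ) • a t - (inner ℝ (a t) (v t) : ℝ) • v t‖ / (c * ‖v t‖ ^ 4) := by
  have h1 : deriv (fun s => c • Γ s) = fun s => c • v s :=
    funext fun s => ((hv s).const_smul c).deriv
  have h2 : deriv (deriv (fun s => c • Γ s)) = fun s => c • a s := by
    rw [h1]; exact funext fun s => ((ha s).const_smul c).deriv
  rw [h2, h1]
  beta_reduce
  have hvec : (inner ℝ (c • v t) (c • v t) : ℝ) • (c • a t) -
      (inner ℝ (c • a t) (c • v t) : ℝ) • (c • v t) =
      (c ^ 3) • ((inner ℝ (v t) (v t) : ℝ) • a t - (inner ℝ (a t) (v t) : ℝ) • v t) := by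
    simp only [real_inner_smul_left, real_inner_smul_right, smul_smul, smul_sub]
    module
  rw [hvec, norm_smul, norm_smul, Real.norm_eq_abs, Real.norm_eq_abs,
    abs_of_pos hc, abs_of_pos (pow_pos hc 3)]
  rw [mul_pow]
  rcases eq_or_ne ‖v t‖ 0 with h0 | h0
  · rw [h0]; norm_num
  · have hv0 : (0:ℝ) < ‖v t‖ := (norm_nonneg _).lt_of_ne (Ne.symm h0)
    rw [div_eq_div_iff (by positivity) (by positivity)]
    ring

set_option maxHeartbeats 1000000 in
lemma claimB_arith (ε τ₀ Mw Mw' σ sR : ℝ) (hε0 : 0 < ε) (hεhalf : ε < 1/2)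
    (hMw0 : 0 ≤ Mw) (hMw'0 : 0 ≤ Mw') (hτ₀ : 0 < τ₀)
    (hσ0 : 0 ≤ σ) (hσsq : σ ^ 2 = (1-ε) ^ 2 + ε ^ 2 * Mw ^ 2)
    (hsR0 : 0 ≤ sR)
    (hsRsq : sR ^ 2 = (1-ε) ^ 2 - 2 * ε * (1-ε) * τ₀ ^ 2 + ε ^ 2 * Mw' ^ 2)
    (hεK : ε * (8 * ((Mw' ^ 2 + Mw ^ 2 + Mw ^ 2 * Mw' ^ 2 + Mw' * Mw + Mw ^ 2 * Mw' * Mw) + 1))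
      < τ₀ ^ 2) :
    σ * sR * (1-ε) ^ 2 + σ ^ 2 * (ε ^ 2 * (Mw' * Mw)) < (1-ε) ^ 4 := by
  have hA0 : (0:ℝ) < 1 - ε := by linarith
  have hAh : (1:ℝ)/2 ≤ 1 - ε := by linarith
  have hA1 : 1 - ε ≤ 1 := by linarith
  have hsrle : sR ≤ (1-ε) - ε * τ₀ ^ 2 + ε ^ 2 * Mw' ^ 2 := by
    have h1 : sR * (2 * (1-ε)) ≤ sR ^ 2 + (1-ε) ^ 2 := by
      nlinarith [sq_nonneg (sR - (1-ε))]
    have h2 : 0 ≤ ε ^ 2 * Mw' ^ 2 * (1 - 2 * ε) := by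
      have : (0:ℝ) ≤ 1 - 2 * ε := by linarith
      positivity
    nlinarith [h1, h2, hA0, hsR0]
  have hσle : σ ≤ (1-ε) + ε ^ 2 * Mw ^ 2 := by
    have hh : 0 ≤ ε ^ 2 * Mw ^ 2 * (1 - 2 * ε) := by
      have : (0:ℝ) ≤ 1 - 2 * ε := by linarith
      positivity
    nlinarith [hσ0, sq_nonneg (σ - (1-ε)), hh, hA0]
  have hsr0 : 0 ≤ (1-ε) - ε * τ₀ ^ 2 + ε ^ 2 * Mw' ^ 2 := le_trans hsR0 hsrle
  have step1 : σ * sR ≤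
      ((1-ε) + ε ^ 2 * Mw ^ 2) * ((1-ε) - ε * τ₀ ^ 2 + ε ^ 2 * Mw' ^ 2) :=
    mul_le_mul hσle hsrle hsR0 (by positivity)
  have hcube : (1:ℝ)/8 ≤ (1-ε) ^ 3 := by nlinarith
  have hεK' : ε * (Mw' ^ 2 + Mw ^ 2 + Mw ^ 2 * Mw' ^ 2 + Mw' * Mw + Mw ^ 2 * Mw' * Mw)
      < τ₀ ^ 2 / 8 := by nlinarith
  have hA3 : (1-ε) ^ 3 ≤ 1 := pow_le_one₀ hA0.le hA1
  have hA2 : (1-ε) ^ 2 ≤ 1 := pow_le_one₀ hA0.le hA1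
  have hε2 : ε ^ 2 * (1-ε) ^ 2 ≤ 1 := by nlinarith
  have n1 : 0 ≤ ε ^ 2 * Mw' ^ 2 * (1 - (1-ε) ^ 3) :=
    mul_nonneg (by positivity) (by linarith)
  have n2 : 0 ≤ ε ^ 2 * Mw ^ 2 * (1 - (1-ε) ^ 3) :=
    mul_nonneg (by positivity) (by linarith)
  have n3 : 0 ≤ ε ^ 3 * Mw ^ 2 * τ₀ ^ 2 * (1-ε) ^ 2 := by positivity
  have n4 : 0 ≤ ε ^ 2 * Mw ^ 2 * Mw' ^ 2 * (1 - ε ^ 2 * (1-ε) ^ 2) :=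
    mul_nonneg (by positivity) (by linarith)
  have m1 : ((1-ε) + ε ^ 2 * Mw ^ 2) * ((1-ε) - ε * τ₀ ^ 2 + ε ^ 2 * Mw' ^ 2) * (1-ε) ^ 2
      ≤ (1-ε) ^ 4 - ε * τ₀ ^ 2 * (1-ε) ^ 3
        + ε ^ 2 * (Mw' ^ 2 + Mw ^ 2 + Mw ^ 2 * Mw' ^ 2) := by nlinarith [n1, n2, n3, n4]
  have n5 : 0 ≤ ε ^ 2 * (Mw' * Mw) * (1 - (1-ε) ^ 2) :=
    mul_nonneg (by positivity) (by linarith)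
  have n6 : 0 ≤ ε ^ 2 * Mw ^ 2 * (Mw' * Mw) * (1 - ε ^ 2) :=
    mul_nonneg (by positivity) (by nlinarith)
  have m2 : ((1-ε) ^ 2 + ε ^ 2 * Mw ^ 2) * (ε ^ 2 * (Mw' * Mw))
      ≤ ε ^ 2 * (Mw' * Mw + Mw ^ 2 * (Mw' * Mw)) := by nlinarith [n5, n6]
  have m3 : ε ^ 2 * (Mw' ^ 2 + Mw ^ 2 + Mw ^ 2 * Mw' ^ 2 + Mw' * Mw + Mw ^ 2 * Mw' * Mw)
      < ε * τ₀ ^ 2 * (1-ε) ^ 3 := by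
    nlinarith [hεK', hcube, hε0, hτ₀, mul_pos hε0 (pow_pos hτ₀ 2)]
  have s2 : σ * sR * (1-ε) ^ 2
      ≤ (((1-ε) + ε ^ 2 * Mw ^ 2) * ((1-ε) - ε * τ₀ ^ 2 + ε ^ 2 * Mw' ^ 2)) * (1-ε) ^ 2 :=
    mul_le_mul_of_nonneg_right step1 (sq_nonneg _)
  have s3 : σ ^ 2 * (ε ^ 2 * (Mw' * Mw)) = ((1-ε) ^ 2 + ε ^ 2 * Mw ^ 2) * (ε ^ 2 * (Mw' * Mw)) := by
    rw [hσsq]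
  nlinarith [s2, m1, m2, m3, s3]

set_option maxHeartbeats 1000000 in
lemma claimA_arith (ε σ sR q Nc MM L S : ℝ) (hε0 : 0 < ε) (hεhalf : ε < 1/2)
    (hσ0 : 0 ≤ σ) (hσA : 1 - ε ≤ σ) (hq : 1 - ε ≤ q) (hqσ : q ≤ σ)
    (hsR0 : 0 ≤ sR) (hMM : 0 ≤ MM) (hNc0 : 0 ≤ Nc)
    (hNc : Nc ≤ q ^ 2 * sR + MM * q)
    (hL : 0 < L) (hS0 : 0 < S) (hSσ : S ≤ L * σ) :
    Nc / (L / S * q ^ 4) ≤ (σ * sR * (1-ε) ^ 2 + σ ^ 2 * MM) / (1-ε) ^ 4 := by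
  have hA0 : (0:ℝ) < 1 - ε := by linarith
  have hq0 : 0 < q := lt_of_lt_of_le hA0 hq
  have hσpos : 0 < σ := lt_of_lt_of_le hA0 hσA
  have hNum0 : 0 ≤ σ * sR * (1-ε) ^ 2 + σ ^ 2 * MM := by positivity
  rw [div_le_div_iff₀ (by positivity) (by positivity)]
  have hq2 : (1-ε) ^ 2 ≤ q ^ 2 := by nlinarith
  have k2 : q ^ 2 * (1-ε) ^ 4 ≤ (1-ε) ^ 2 * q ^ 4 := by
    have h := mul_le_mul_of_nonneg_left hq2
      (mul_nonneg (sq_nonneg (1-ε)) (sq_nonneg q))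
    nlinarith [h]
  have e1 : (1-ε) ^ 3 ≤ q ^ 3 := pow_le_pow_left₀ hA0.le hq 3
  have e2 : (1-ε) ^ 4 ≤ σ * q ^ 3 := by
    have h := mul_le_mul hσA e1 (by positivity) hσ0
    nlinarith [h]
  have k3 : σ * q * (1-ε) ^ 4 ≤ σ ^ 2 * q ^ 4 := by
    have h := mul_le_mul_of_nonneg_left e2 (mul_nonneg hσ0 hq0.le)
    nlinarith [h]
  have key : σ * ((q ^ 2 * sR + MM * q) * (1-ε) ^ 4)
      ≤ (σ * sR * (1-ε) ^ 2 + σ ^ 2 * MM) * q ^ 4 := by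
    nlinarith [mul_le_mul_of_nonneg_left k2 (mul_nonneg hσ0 hsR0),
      mul_le_mul_of_nonneg_left k3 hMM]
  have hLS : 1 / σ ≤ L / S := by
    rw [div_le_div_iff₀ hσpos hS0]
    nlinarith [hSσ]
  have h6 : (σ * sR * (1-ε) ^ 2 + σ ^ 2 * MM) * (1 / σ * q ^ 4)
      ≤ (σ * sR * (1-ε) ^ 2 + σ ^ 2 * MM) * (L / S * q ^ 4) :=
    mul_le_mul_of_nonneg_left
      (mul_le_mul_of_nonneg_right hLS (by positivity)) hNum0
  have h8 : σ * (Nc * (1-ε) ^ 4) ≤ (σ * sR * (1-ε) ^ 2 + σ ^ 2 * MM) * q ^ 4 := by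
    refine le_trans ?_ key
    have h9 := mul_le_mul_of_nonneg_right hNc (pow_nonneg hA0.le 4)
    exact mul_le_mul_of_nonneg_left h9 hσ0
  have h7 : Nc * (1-ε) ^ 4 ≤ (σ * sR * (1-ε) ^ 2 + σ ^ 2 * MM) * (1 / σ * q ^ 4) := by
    rw [show (σ * sR * (1-ε) ^ 2 + σ ^ 2 * MM) * (1 / σ * q ^ 4)
        = ((σ * sR * (1-ε) ^ 2 + σ ^ 2 * MM) * q ^ 4) / σ by field_simp]
    rw [le_div_iff₀ hσpos]
    nlinarith [h8]
  linarith [h7, h6]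


set_option maxHeartbeats 2000000 in
/-- For a closed unit-speed C⁴ curve of constant curvature 1 with torsion bounded
below by τ₀ > 0, the rescaled normal variation Γ_ε has curvature < 1 everywhere
for all small ε > 0; in particular its supremum over the curve is < 1. -/
theorem small_normal_variation_has_curvature_lt_one {n : ℕ} (L τ₀ : ℝ)
    (hL : 0 < L) (hτ₀ : 0 < τ₀)
    (γ : ℝ → EuclideanSpace ℝ (Fin n)) (hγ : ContDiff ℝ 4 γ)
    (hper : Function.Periodic γ L)
    (hunit : ∀ t, ‖deriv γ t‖ = 1)
    (hκ : ∀ t, ‖deriv (deriv γ) t‖ = 1)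
    (hτ : ∀ t, τ₀ ≤ ‖deriv (deriv (deriv γ)) t + deriv γ t‖) :
    ∃ ε₀ > 0, ∀ ε ∈ Set.Ioo (0 : ℝ) ε₀,
      (∀ t : ℝ,
        curv (fun s =>
          (L / ∫ u in (0:ℝ)..L,
              ‖deriv (fun r => γ r + ε • deriv (deriv γ) r) u‖) •
            (γ s + ε • deriv (deriv γ) s)) t < 1) ∧
      (⨆ t : Set.Icc (0 : ℝ) L,
        curv (fun s =>
          (L / ∫ u in (0:ℝ)..L,
              ‖deriv (fun r => γ r + ε • deriv (deriv γ) r) u‖) •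
            (γ s + ε • deriv (deriv γ) s)) t) < 1 := by
  set g1 := deriv γ with hg1
  set g2 := deriv g1 with hg2
  set g3 := deriv g2 with hg3
  set g4 := deriv g3 with hg4
  -- smoothness
  have h4' : ContDiff ℝ ((3:ℕ)+1) γ := by exact_mod_cast hγ
  have d0 : Differentiable ℝ γ := (contDiff_succ_iff_deriv.mp h4').1
  have h3' : ContDiff ℝ ((2:ℕ)+1) g1 := by
    exact_mod_cast (contDiff_succ_iff_deriv.mp h4').2.2
  have d1 : Differentiable ℝ g1 := (contDiff_succ_iff_deriv.mp h3').1
  have h2' : ContDiff ℝ ((1:ℕ)+1) g2 := by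
    exact_mod_cast (contDiff_succ_iff_deriv.mp h3').2.2
  have d2 : Differentiable ℝ g2 := (contDiff_succ_iff_deriv.mp h2').1
  have h1' : ContDiff ℝ ((0:ℕ)+1) g3 := by
    exact_mod_cast (contDiff_succ_iff_deriv.mp h2').2.2
  have d3 : Differentiable ℝ g3 := (contDiff_succ_iff_deriv.mp h1').1
  have c4 : Continuous g4 := ((contDiff_succ_iff_deriv.mp h1').2.2).continuous
  -- derivative facts
  have D0 : ∀ t, HasDerivAt γ (g1 t) t := fun t => (d0 t).hasDerivAt
  have D1 : ∀ t, HasDerivAt g1 (g2 t) t := fun t => (d1 t).hasDerivAt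
  have D2 : ∀ t, HasDerivAt g2 (g3 t) t := fun t => (d2 t).hasDerivAt
  have D3 : ∀ t, HasDerivAt g3 (g4 t) t := fun t => (d3 t).hasDerivAt
  set w : ℝ → EuclideanSpace ℝ (Fin n) := fun t => g3 t + g1 t with hw
  set w' : ℝ → EuclideanSpace ℝ (Fin n) := fun t => g4 t + g2 t with hw'
  have Dw : ∀ t, HasDerivAt w (w' t) t := fun t => (D3 t).add (D1 t)
  -- periodicity and bounds
  have p1 : Function.Periodic g1 L := periodic_deriv'' hper
  have p2 : Function.Periodic g2 L := periodic_deriv'' p1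
  have p3 : Function.Periodic g3 L := periodic_deriv'' p2
  have p4 : Function.Periodic g4 L := periodic_deriv'' p3
  have pw : Function.Periodic w L := fun t => by simp only [hw, p3 t, p1 t]
  have pw' : Function.Periodic w' L := fun t => by simp only [hw', p4 t, p2 t]
  obtain ⟨Mw, hMw0, hMw⟩ := bound_of_periodic hL ((d3.continuous).add (d1.continuous)) pw
  obtain ⟨Mw', hMw'0, hMw'⟩ := bound_of_periodic hL (c4.add (d2.continuous)) pw'
  -- inner product identities
  have i11 : ∀ t, (inner ℝ (g1 t) (g1 t) : ℝ) = 1 := fun t => by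
    rw [real_inner_self_eq_norm_sq, hunit]; norm_num
  have i22 : ∀ t, (inner ℝ (g2 t) (g2 t) : ℝ) = 1 := fun t => by
    rw [real_inner_self_eq_norm_sq, hκ]; norm_num
  have i21 : ∀ t, (inner ℝ (g2 t) (g1 t) : ℝ) = 0 := fun t => by
    have h := deriv_const_inner D1 D1 i11 t
    have hc := real_inner_comm (g1 t) (g2 t)
    linarith
  have i12 : ∀ t, (inner ℝ (g1 t) (g2 t) : ℝ) = 0 := fun t => by
    rw [real_inner_comm]; exact i21 t
  have i31 : ∀ t, (inner ℝ (g3 t) (g1 t) : ℝ) = -1 := fun t => by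
    have h := deriv_const_inner D2 D1 i21 t
    have := i22 t
    linarith
  have i32 : ∀ t, (inner ℝ (g3 t) (g2 t) : ℝ) = 0 := fun t => by
    have h := deriv_const_inner D2 D2 i22 t
    have hc := real_inner_comm (g2 t) (g3 t)
    linarith
  have iw1 : ∀ t, (inner ℝ (w t) (g1 t) : ℝ) = 0 := fun t => by
    simp only [hw, inner_add_left, i31 t, i11 t]; ring
  have iw2 : ∀ t, (inner ℝ (w t) (g2 t) : ℝ) = 0 := fun t => by
    simp only [hw, inner_add_left, i32 t, i12 t]; ring
  have i1w : ∀ t, (inner ℝ (g1 t) (w t) : ℝ) = 0 := fun t => by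
    rw [real_inner_comm]; exact iw1 t
  have i2w : ∀ t, (inner ℝ (g2 t) (w t) : ℝ) = 0 := fun t => by
    rw [real_inner_comm]; exact iw2 t
  have iw'1 : ∀ t, (inner ℝ (w' t) (g1 t) : ℝ) = 0 := fun t => by
    have h := deriv_const_inner Dw D1 iw1 t
    have := iw2 t
    linarith
  have i3w : ∀ t, (inner ℝ (g3 t) (w t) : ℝ) = ‖w t‖ ^ 2 := fun t => by
    have : g3 t = w t - g1 t := by simp [hw]
    rw [this, inner_sub_left, i1w t, real_inner_self_eq_norm_sq]; ring
  have i2w' : ∀ t, (inner ℝ (g2 t) (w' t) : ℝ) = -‖w t‖ ^ 2 := fun t => by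
    have h := deriv_const_inner D2 Dw i2w t
    have := i3w t
    linarith
  -- torsion bound
  have hτw : ∀ t, τ₀ ^ 2 ≤ ‖w t‖ ^ 2 := fun t => by
    have h := hτ t
    nlinarith [norm_nonneg (w t)]
  have hMwsq : ∀ t, ‖w t‖ ^ 2 ≤ Mw ^ 2 := fun t => by
    exact pow_le_pow_left₀ (norm_nonneg _) (hMw t) 2
  have hMw'sq : ∀ t, ‖w' t‖ ^ 2 ≤ Mw' ^ 2 := fun t => by
    exact pow_le_pow_left₀ (norm_nonneg _) (hMw' t) 2
  -- choose ε₀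
  set K : ℝ := Mw' ^ 2 + Mw ^ 2 + Mw ^ 2 * Mw' ^ 2 + Mw' * Mw + Mw ^ 2 * Mw' * Mw with hK
  have hK0 : 0 ≤ K := by positivity
  refine ⟨min (1/2) (τ₀ ^ 2 / (8 * (K + 1))), by positivity, fun ε hε => ?_⟩
  obtain ⟨hε0, hεlt⟩ := hε
  have hεhalf : ε < 1/2 := lt_of_lt_of_le hεlt (min_le_left _ _)
  have hεK : ε * (8 * (K + 1)) < τ₀ ^ 2 := by
    have := lt_of_lt_of_le hεlt (min_le_right _ _)
    exact (lt_div_iff₀ (by positivity)).mp this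
  have hA0 : (0:ℝ) < 1 - ε := by linarith
  have hAh : (1:ℝ)/2 ≤ 1 - ε := by linarith
  have hA1 : 1 - ε ≤ 1 := by linarith
  -- the velocity and acceleration of Γ_ε
  have Dv : ∀ s, HasDerivAt (fun r => γ r + ε • g2 r) (g1 s + ε • g3 s) s :=
    fun s => (D0 s).add ((D2 s).const_smul ε)
  have Da : ∀ s, HasDerivAt (fun u => g1 u + ε • g3 u) (g2 s + ε • g4 s) s :=
    fun s => (D1 s).add ((D3 s).const_smul ε)
  have hdΓ : (deriv fun r => γ r + ε • g2 r) = fun u => g1 u + ε • g3 u :=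
    funext fun u => (Dv u).deriv
  simp only [hdΓ]
  set S := ∫ u in (0:ℝ)..L, ‖g1 u + ε • g3 u‖ with hS
  -- pointwise norms
  have hveq : ∀ s, g1 s + ε • g3 s = (1-ε) • g1 s + ε • w s := fun s => by
    simp only [hw]; module
  have haeq : ∀ s, g2 s + ε • g4 s = (1-ε) • g2 s + ε • w' s := fun s => by
    simp only [hw']; module
  have hvnorm : ∀ s, ‖g1 s + ε • g3 s‖ ^ 2 = (1-ε) ^ 2 + ε ^ 2 * ‖w s‖ ^ 2 := fun s => by
    rw [hveq s, norm_add_sq_real, norm_smul, norm_smul, real_inner_smul_left,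
      real_inner_smul_right, i1w s, Real.norm_eq_abs, Real.norm_eq_abs,
      abs_of_pos hA0, abs_of_pos hε0, hunit s]
    ring
  have hanorm : ∀ s, ‖g2 s + ε • g4 s‖ ^ 2
      = (1-ε) ^ 2 - 2 * ε * (1-ε) * ‖w s‖ ^ 2 + ε ^ 2 * ‖w' s‖ ^ 2 := fun s => by
    rw [haeq s, norm_add_sq_real, norm_smul, norm_smul, real_inner_smul_left,
      real_inner_smul_right, i2w' s, Real.norm_eq_abs, Real.norm_eq_abs,
      abs_of_pos hA0, abs_of_pos hε0, hκ s]
    ring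
  have hvA : ∀ s, 1 - ε ≤ ‖g1 s + ε • g3 s‖ := fun s => by
    nlinarith [hvnorm s, norm_nonneg (g1 s + ε • g3 s), sq_nonneg (ε * ‖w s‖)]
  -- σ
  set σ := Real.sqrt ((1-ε) ^ 2 + ε ^ 2 * Mw ^ 2) with hσ
  have hσsq : σ ^ 2 = (1-ε) ^ 2 + ε ^ 2 * Mw ^ 2 := Real.sq_sqrt (by positivity)
  have hσ0 : 0 ≤ σ := Real.sqrt_nonneg _
  have hσA : 1 - ε ≤ σ := by nlinarith [hσsq, hσ0]
  have hσpos : 0 < σ := lt_of_lt_of_le hA0 hσA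
  have hvσ : ∀ s, ‖g1 s + ε • g3 s‖ ≤ σ := fun s => by
    nlinarith [hvnorm s, norm_nonneg (g1 s + ε • g3 s), hMwsq s, hσsq, hσ0, sq_nonneg ε]
  -- integral bounds
  have hcont_v : Continuous fun u => ‖g1 u + ε • g3 u‖ :=
    (d1.continuous.add (d3.continuous.const_smul ε)).norm
  have hS_lo : L * (1 - ε) ≤ S := by
    have h := intervalIntegral.integral_mono_on (μ := MeasureTheory.volume) hL.le
      (intervalIntegrable_const (c := 1 - ε))
      (hcont_v.intervalIntegrable 0 L) (fun x _ => hvA x)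
    rwa [intervalIntegral.integral_const, sub_zero, smul_eq_mul] at h
  have hS_up : S ≤ L * σ := by
    have h := intervalIntegral.integral_mono_on (μ := MeasureTheory.volume) hL.le
      (hcont_v.intervalIntegrable 0 L)
      (intervalIntegrable_const (c := σ)) (fun x _ => hvσ x)
    rwa [intervalIntegral.integral_const, sub_zero, smul_eq_mul] at h
  have hSpos : 0 < S := lt_of_lt_of_le (by positivity) hS_lo
  have hc : 0 < L / S := div_pos hL hSpos
  -- R and D
  set R : ℝ := (1-ε) ^ 2 - 2 * ε * (1-ε) * τ₀ ^ 2 + ε ^ 2 * Mw' ^ 2 with hR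
  have haR : ∀ s, ‖g2 s + ε • g4 s‖ ^ 2 ≤ R := fun s => by
    have h1 := hanorm s
    have h2 := hτw s
    have h3 := hMw'sq s
    nlinarith [mul_pos hε0 hA0]
  have hR0 : 0 ≤ R := le_trans (sq_nonneg _) (haR 0)
  have hsR0 : 0 ≤ Real.sqrt R := Real.sqrt_nonneg _
  have haRs : ∀ s, ‖g2 s + ε • g4 s‖ ≤ Real.sqrt R := fun s => by
    rw [← Real.sqrt_sq (norm_nonneg (g2 s + ε • g4 s))]
    exact Real.sqrt_le_sqrt (haR s)
  set Num : ℝ := σ * Real.sqrt R * (1-ε) ^ 2 + σ ^ 2 * (ε ^ 2 * (Mw' * Mw)) with hNum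
  have hNum0 : 0 ≤ Num := by positivity
  set D : ℝ := Num / (1-ε) ^ 4 with hD
  -- Claim B : D < 1
  have hB : Num < (1-ε) ^ 4 := by
    rw [hNum]
    apply claimB_arith ε τ₀ Mw Mw' σ (Real.sqrt R) hε0 hεhalf hMw0 hMw'0 hτ₀ hσ0 hσsq hsR0
    · rw [Real.sq_sqrt hR0, hR]
    · rw [hK] at hεK
      linarith [hεK]
  have hD1 : D < 1 := by
    rw [hD, div_lt_one (by positivity)]
    exact hB
  -- Claim A : pointwise bound
  have hmain : ∀ t : ℝ,
      curv (fun s => (L / S) • (γ s + ε • g2 s)) t ≤ D := by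
    intro t
    have hcurv : curv (fun s => (L / S) • (γ s + ε • g2 s)) t =
        ‖(inner ℝ (g1 t + ε • g3 t) (g1 t + ε • g3 t) : ℝ) • (g2 t + ε • g4 t) -
          (inner ℝ (g2 t + ε • g4 t) (g1 t + ε • g3 t) : ℝ) • (g1 t + ε • g3 t)‖ /
          (L / S * ‖g1 t + ε • g3 t‖ ^ 4) :=
      curv_eq' (L / S) hc Dv Da t
    rw [hcurv]
    have hiav : (inner ℝ (g2 t + ε • g4 t) (g1 t + ε • g3 t) : ℝ)
        = ε ^ 2 * (inner ℝ (w' t) (w t) : ℝ) := by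
      rw [haeq t, hveq t]
      simp only [inner_add_left, inner_add_right, real_inner_smul_left, real_inner_smul_right,
        i21 t, i2w t, iw'1 t, i2w' t]
      ring
    have hiavabs : |(inner ℝ (g2 t + ε • g4 t) (g1 t + ε • g3 t) : ℝ)| ≤ ε ^ 2 * (Mw' * Mw) := by
      rw [hiav, abs_mul, abs_of_nonneg (sq_nonneg ε)]
      have h1 : |(inner ℝ (w' t) (w t) : ℝ)| ≤ ‖w' t‖ * ‖w t‖ := abs_real_inner_le_norm _ _
      have h2 : ‖w' t‖ * ‖w t‖ ≤ Mw' * Mw :=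
        mul_le_mul (hMw' t) (hMw t) (norm_nonneg _) hMw'0
      nlinarith [sq_nonneg ε]
    have hivv : (inner ℝ (g1 t + ε • g3 t) (g1 t + ε • g3 t) : ℝ)
        = ‖g1 t + ε • g3 t‖ ^ 2 := real_inner_self_eq_norm_sq _
    have hNc : ‖(inner ℝ (g1 t + ε • g3 t) (g1 t + ε • g3 t) : ℝ) • (g2 t + ε • g4 t) -
        (inner ℝ (g2 t + ε • g4 t) (g1 t + ε • g3 t) : ℝ) • (g1 t + ε • g3 t)‖
        ≤ ‖g1 t + ε • g3 t‖ ^ 2 * Real.sqrt R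
          + ε ^ 2 * (Mw' * Mw) * ‖g1 t + ε • g3 t‖ := by
      refine le_trans (norm_sub_le _ _) ?_
      rw [norm_smul, norm_smul, hivv, Real.norm_eq_abs, Real.norm_eq_abs,
        abs_of_nonneg (sq_nonneg _)]
      have b1 : ‖g1 t + ε • g3 t‖ ^ 2 * ‖g2 t + ε • g4 t‖
          ≤ ‖g1 t + ε • g3 t‖ ^ 2 * Real.sqrt R :=
        mul_le_mul_of_nonneg_left (haRs t) (sq_nonneg _)
      have b2 : |(inner ℝ (g2 t + ε • g4 t) (g1 t + ε • g3 t) : ℝ)| * ‖g1 t + ε • g3 t‖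
          ≤ ε ^ 2 * (Mw' * Mw) * ‖g1 t + ε • g3 t‖ :=
        mul_le_mul_of_nonneg_right hiavabs (norm_nonneg _)
      linarith
    rw [hD, hNum]
    exact claimA_arith ε σ (Real.sqrt R) (‖g1 t + ε • g3 t‖) _ (ε ^ 2 * (Mw' * Mw)) L S
      hε0 hεhalf hσ0 hσA (hvA t) (hvσ t) hsR0 (by positivity) (norm_nonneg _) hNc hL hSpos hS_up
  haveI : Nonempty (Set.Icc (0:ℝ) L) := ⟨⟨0, le_refl 0, hL.le⟩⟩
  exact ⟨fun t => lt_of_le_of_lt (hmain t) hD1,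
    lt_of_le_of_lt (ciSup_le (fun t => hmain t.1)) hD1⟩
end
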